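/- Let x = x₁x₂x₃… be an infinite word over a finite alphabet. Then x is a Sturmian word if and only if r(n,x) ≤ 2n + 1 for every n ≥ 1 and r(n,x) = 2n + 1 for infinitely many n. -/

import Mathlib

open Filter

/-- `rc n x` : length of the shortest prefix of the infinite word `x` containing two
(possibly overlapping) occurrences of some word of length `n`.  Here `x k` is the
`(k+1)`-st letter of the word, so an occurrence of a length-`n` word at (1-based)
position `i` corresponds to the 0-based starting index `i - 1`. -/
noncomputable def rc {A : Type*} (n : ℕ) (x : ℕ → A) : ℕ :=
  sInf {m | ∃ j, j + n < m ∧ ∀ t < n, x (j + t) = x (m - n + t)}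

/-- subword complexity: the number of distinct factors of length `n` of `x` -/
noncomputable def pc {A : Type*} (n : ℕ) (x : ℕ → A) : ℕ :=
  Set.ncard {w : Fin n → A | ∃ k, ∀ t : Fin n, w t = x (k + t.1)}

def EventuallyPeriodic {A : Type*} (x : ℕ → A) : Prop :=
  ∃ p > 0, ∃ N, ∀ n ≥ N, x (n + p) = x n

def IsSturmian {A : Type*} (x : ℕ → A) : Prop := ∀ n ≥ 1, pc n x = n + 1

/-- exponent of repetition: `liminf r(n,x)/n` -/
noncomputable def repExp {A : Type*} (x : ℕ → A) : EReal :=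
  Filter.atTop.liminf fun n => (((rc n x : ℝ) / (n : ℝ) : ℝ) : EReal)

namespace SturmianRcAux

variable {A : Type*} [Fintype A] (x : ℕ → A)

/-- the factor of length `n` at position `k` -/
def ff (n k : ℕ) : Fin n → A := fun t => x (k + t.1)

/-- the set of positions of "second occurrences" of repeated length-`n` factors -/
def ts (n : ℕ) : Set ℕ := {k | ∃ j < k, ∀ t < n, x (j + t) = x (k + t)}

/-- the first-repeat position at scale `n` -/
noncomputable def sf (n : ℕ) : ℕ := sInf (ts x n)

/-- the language of factors of length `n` -/
def lf (n : ℕ) : Set (Fin n → A) := {w | ∃ k, w = ff x n k}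

lemma ff_eq_iff {n j k : ℕ} : ff x n j = ff x n k ↔ ∀ t < n, x (j + t) = x (k + t) := by
  constructor
  · intro h t ht
    exact congrFun h ⟨t, ht⟩
  · intro h; funext t; exact h t t.2

lemma ts_nonempty (n : ℕ) : (ts x n).Nonempty := by
  obtain ⟨i, i', hne, h⟩ := Fintype.exists_ne_map_eq_of_card_lt
    (fun i : Fin (Fintype.card (Fin n → A) + 1) => ff x n i.1) (by simp)
  rcases Nat.lt_or_ge i.1 i'.1 with hlt | hge
  · exact ⟨i'.1, i.1, hlt, (ff_eq_iff x).1 h⟩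
  · have hlt : i'.1 < i.1 := lt_of_le_of_ne hge (by
      intro hh; exact hne (Fin.ext hh.symm))
    exact ⟨i.1, i'.1, hlt, (ff_eq_iff x).1 h.symm⟩

lemma sf_mem (n : ℕ) : sf x n ∈ ts x n := Nat.sInf_mem (ts_nonempty x n)

lemma sf_le {n k : ℕ} (h : k ∈ ts x n) : sf x n ≤ k := Nat.sInf_le h

lemma sf_pos (n : ℕ) : 1 ≤ sf x n := by
  obtain ⟨j, hj, -⟩ := sf_mem x n; omega

lemma sf_mono {n m : ℕ} (h : n ≤ m) : sf x n ≤ sf x m := by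
  obtain ⟨j, hj, hm⟩ := sf_mem x m
  exact sf_le x ⟨j, hj, fun t ht => hm t (lt_of_lt_of_le ht h)⟩

lemma rc_eq (n : ℕ) : rc n x = sf x n + n := by
  unfold rc
  apply le_antisymm
  · apply Nat.sInf_le
    obtain ⟨j, hj, hm⟩ := sf_mem x n
    refine ⟨j, by omega, fun t ht => ?_⟩
    have : sf x n + n - n = sf x n := by omega
    rw [this]; exact hm t ht
  · have hne : {m | ∃ j, j + n < m ∧ ∀ t < n, x (j + t) = x (m - n + t)}.Nonempty := by
      obtain ⟨j, hj, hm⟩ := sf_mem x n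
      refine ⟨sf x n + n, j, by omega, fun t ht => ?_⟩
      have : sf x n + n - n = sf x n := by omega
      rw [this]; exact hm t ht
    obtain ⟨j, hj, hm⟩ := Nat.sInf_mem hne
    set m := sInf {m | ∃ j, j + n < m ∧ ∀ t < n, x (j + t) = x (m - n + t)} with hmdef
    have h1 : m - n ∈ ts x n := ⟨j, by omega, hm⟩
    have := sf_le x h1
    omega

lemma pc_eq (n : ℕ) : pc n x = (lf x n).ncard := by
  unfold pc lf
  congr 1
  ext w
  constructor
  · rintro ⟨k, hk⟩; exact ⟨k, funext fun t => hk t⟩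
  · rintro ⟨k, rfl⟩; exact ⟨k, fun t => rfl⟩

lemma mem_lf (n k : ℕ) : ff x n k ∈ lf x n := ⟨k, rfl⟩

lemma ncard_Iic (n : ℕ) : (Set.Iic n).ncard = n + 1 := by
  rw [← Finset.coe_Iic, Set.ncard_coe_finset, Nat.card_Iic]

/-- pigeonhole: the first repeat comes no later than the complexity -/
lemma sf_le_pc (n : ℕ) : sf x n ≤ pc n x := by
  by_contra hcon
  push_neg at hcon
  have hinj : Set.InjOn (ff x n) (Set.Iic (pc n x)) := by
    intro i hi i' hi' heq
    by_contra hne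
    rcases lt_or_gt_of_ne hne with h | h
    · have : i' ∈ ts x n := ⟨i, h, (ff_eq_iff x).1 heq⟩
      have := sf_le x this
      simp only [Set.mem_Iic] at hi'; omega
    · have : i ∈ ts x n := ⟨i', h, (ff_eq_iff x).1 heq.symm⟩
      have := sf_le x this
      simp only [Set.mem_Iic] at hi; omega
  have h1 : (ff x n '' Set.Iic (pc n x)).ncard = pc n x + 1 := by
    rw [Set.ncard_image_of_injOn hinj, ncard_Iic]
  have h2 : ff x n '' Set.Iic (pc n x) ⊆ lf x n := by
    rintro _ ⟨k, -, rfl⟩; exact mem_lf x n k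
  have h3 := Set.ncard_le_ncard h2 (Set.toFinite _)
  rw [h1, ← pc_eq] at h3
  omega

/-- if all factors occur with starting index `≤ n` then `pc n ≤ n + 1` -/
lemma pc_le_of_subset {n : ℕ} (hsub : lf x n ⊆ ff x n '' Set.Iic n) : pc n x ≤ n + 1 := by
  have h := Set.ncard_le_ncard hsub (Set.toFinite _)
  calc pc n x = (lf x n).ncard := pc_eq x n
    _ ≤ (ff x n '' Set.Iic n).ncard := h
    _ ≤ (Set.Iic n).ncard := Set.ncard_image_le (Set.finite_Iic n)
    _ = n + 1 := ncard_Iic n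

/-- if moreover there is a repeat among the first `n+1` windows then `pc n ≤ n` -/
lemma pc_le_of_subset_rep {n : ℕ} (hs : sf x n ≤ n) (hsub : lf x n ⊆ ff x n '' Set.Iic n) :
    pc n x ≤ n := by
  obtain ⟨j, hj, hm⟩ := sf_mem x n
  have hj' : ff x n j = ff x n (sf x n) := (ff_eq_iff x).2 hm
  have hsub2 : lf x n ⊆ ff x n '' (Set.Iic n \ {sf x n}) := by
    intro w hw
    obtain ⟨i, hi, rfl⟩ := hsub hw
    simp only [Set.mem_Iic] at hi
    by_cases hie : i = sf x n
    · exact ⟨j, ⟨Set.mem_Iic.2 (by omega), by simp; omega⟩, by rw [hie, ← hj']⟩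
    · exact ⟨i, ⟨Set.mem_Iic.2 hi, by simp [hie]⟩, rfl⟩
  have h := Set.ncard_le_ncard hsub2 (Set.toFinite _)
  have h2 : (Set.Iic n \ {sf x n}).ncard = n := by
    rw [Set.ncard_diff_singleton_of_mem (Set.mem_Iic.2 hs), ncard_Iic]
    omega
  calc pc n x = (lf x n).ncard := pc_eq x n
    _ ≤ (ff x n '' (Set.Iic n \ {sf x n})).ncard := h
    _ ≤ (Set.Iic n \ {sf x n}).ncard := Set.ncard_image_le ((Set.finite_Iic n).diff)
    _ = n := h2

/-- if some factor of length `n` never occurs with starting index `≤ n`, extract its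
minimal occurrence -/
lemma exists_missing {n : ℕ} (h : ¬ lf x n ⊆ ff x n '' Set.Iic n) :
    ∃ q, n < q ∧ ∀ k, ff x n k = ff x n q → q ≤ k := by
  rw [Set.not_subset] at h
  obtain ⟨w, hw, hwn⟩ := h
  obtain ⟨k₀, rfl⟩ := hw
  set O := {k | ff x n k = ff x n k₀} with hO
  have hOne : O.Nonempty := ⟨k₀, rfl⟩
  set q := sInf O with hq
  have hqmem : ff x n q = ff x n k₀ := Nat.sInf_mem hOne
  have hqn : n < q := by
    by_contra hc
    push_neg at hc
    exact hwn ⟨q, Set.mem_Iic.2 hc, hqmem⟩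
  refine ⟨q, hqn, fun k hk => Nat.sInf_le ?_⟩
  show ff x n k = ff x n k₀
  rw [hk, hqmem]

/-- THE CAPTURE LEMMA: if `q` is the minimal occurrence of its factor of length `ν`,
no scale `m` can have its first repeat `sf m ≤ q` with `q + ν ≤ sf m + m`. -/
lemma capture {ν q m : ℕ} (hqmin : ∀ k, ff x ν k = ff x ν q → q ≤ k)
    (h1 : sf x m ≤ q) (h2 : q + ν ≤ sf x m + m) : False := by
  obtain ⟨j, hj, hmatch⟩ := sf_mem x m
  set s := sf x m with hs
  have key : ff x ν (j + (q - s)) = ff x ν q := by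
    funext t
    show x (j + (q - s) + t.1) = x (q + t.1)
    have ht : q - s + t.1 < m := by have := t.2; omega
    have := hmatch (q - s + t.1) ht
    have e1 : j + (q - s) + t.1 = j + (q - s + t.1) := by omega
    have e2 : s + (q - s + t.1) = q + t.1 := by omega
    rw [e1, this, e2]
  have := hqmin _ key
  omega

/-- main step: from a minimal far occurrence, produce the jump scale `μ` -/
lemma main_step {ν q : ℕ} (hqmin : ∀ k, ff x ν k = ff x ν q → q ≤ k)
    (hν : sf x ν < q) :
    ∃ μ, ν < μ ∧ q < sf x μ ∧ sf x (μ - 1) + μ ≤ q + ν := by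
  set M := {m | ν ≤ m ∧ q + ν ≤ sf x m + m} with hM
  have hMne : M.Nonempty := ⟨q + ν, by constructor <;> omega⟩
  set μ := sInf M with hμdef
  obtain ⟨hμν, hμ2⟩ : ν ≤ μ ∧ q + ν ≤ sf x μ + μ := Nat.sInf_mem hMne
  have hcap : q < sf x μ := by
    by_contra hc
    push_neg at hc
    exact capture x hqmin hc hμ2
  have hμne : μ ≠ ν := by
    intro he
    rw [he] at hμ2
    omega
  have hμν' : ν < μ := lt_of_le_of_ne hμν (Ne.symm hμne)
  have hnotmem : μ - 1 ∉ M := Nat.notMem_of_lt_sInf (by omega)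
  have : ¬ (ν ≤ μ - 1 ∧ q + ν ≤ sf x (μ - 1) + (μ - 1)) := hnotmem
  have hlast : sf x (μ - 1) + (μ - 1) < q + ν := by
    by_contra hc
    push_neg at hc
    exact this ⟨by omega, hc⟩
  exact ⟨μ, hμν', hcap, by omega⟩

/-- eventually periodic words have bounded first-repeat function -/
lemma sf_bounded_of_evp (h : EventuallyPeriodic x) : ∃ C, ∀ n, sf x n ≤ C := by
  obtain ⟨p, hp, N, hper⟩ := h
  refine ⟨N + p, fun n => sf_le x ⟨N, by omega, fun t ht => ?_⟩⟩
  have := hper (N + t) (by omega)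
  have e : N + t + p = N + p + t := by omega
  rw [e] at this
  exact this.symm

/-- eventually periodic words have bounded complexity -/
lemma pc_bounded_of_evp (h : EventuallyPeriodic x) : ∃ C, ∀ n, pc n x ≤ C := by
  obtain ⟨p, hp, N, hper⟩ := h
  refine ⟨N + p + 1, fun n => ?_⟩
  have hrec : ∀ k, ∃ k₀ ≤ N + p, ff x n k = ff x n k₀ := by
    intro k
    induction k using Nat.strong_induction_on with
    | _ k IH =>
      by_cases hk : k ≤ N + p
      · exact ⟨k, hk, rfl⟩
      · push_neg at hk
        have hmatch : ff x n k = ff x n (k - p) := by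
          funext t
          show x (k + t.1) = x (k - p + t.1)
          have := hper (k - p + t.1) (by omega)
          have e : k - p + t.1 + p = k + t.1 := by omega
          rw [e] at this
          exact this
        obtain ⟨k₀, hk₀, hke⟩ := IH (k - p) (by omega)
        exact ⟨k₀, hk₀, hmatch.trans hke⟩
  have hsub : lf x n ⊆ ff x n '' Set.Iic (N + p) := by
    rintro w ⟨k, rfl⟩
    obtain ⟨k₀, hk₀, hke⟩ := hrec k
    exact ⟨k₀, Set.mem_Iic.2 hk₀, hke.symm⟩
  calc pc n x = (lf x n).ncard := pc_eq x n
    _ ≤ (ff x n '' Set.Iic (N + p)).ncard := Set.ncard_le_ncard hsub (Set.toFinite _)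
    _ ≤ (Set.Iic (N + p)).ncard := Set.ncard_image_le (Set.finite_Iic _)
    _ = N + p + 1 := ncard_Iic _

/-- Sturmian words are not eventually periodic -/
lemma not_evp_of_sturmian (hSt : IsSturmian x) : ¬ EventuallyPeriodic x := by
  intro h
  obtain ⟨C, hC⟩ := pc_bounded_of_evp x h
  have h1 := hSt (C + 1) (by omega)
  have h2 := hC (C + 1)
  omega

/-- Morse–Hedlund: if the complexity does not strictly increase at some level `n ≥ 1`,
the word is eventually periodic -/
lemma evp_of_pc_succ_le {n : ℕ} (hn : 1 ≤ n) (h : pc (n + 1) x ≤ pc n x) :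
    EventuallyPeriodic x := by
  set π : (Fin (n + 1) → A) → (Fin n → A) := fun w t => w t.castSucc with hπ
  have hπff : ∀ k, π (ff x (n + 1) k) = ff x n k := fun k => rfl
  have himg : π '' lf x (n + 1) = lf x n := by
    ext w
    constructor
    · rintro ⟨v, ⟨k, rfl⟩, rfl⟩
      exact ⟨k, (hπff k).symm⟩
    · rintro ⟨k, rfl⟩
      exact ⟨ff x (n + 1) k, mem_lf x (n + 1) k, hπff k⟩
  have hinj : Set.InjOn π (lf x (n + 1)) := by
    apply Set.injOn_of_ncard_image_eq _ (Set.toFinite _)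
    rw [himg]
    have h1 := pc_eq x n
    have h2 := pc_eq x (n + 1)
    have hle : (lf x n).ncard ≤ (lf x (n + 1)).ncard := by
      rw [← himg]
      exact Set.ncard_image_le (Set.toFinite _)
    omega
  have hstep : ∀ k k', ff x n k = ff x n k' → ff x n (k + 1) = ff x n (k' + 1) := by
    intro k k' hkk
    have hfull : ff x (n + 1) k = ff x (n + 1) k' := by
      apply hinj (mem_lf x (n + 1) k) (mem_lf x (n + 1) k')
      rw [hπff, hπff, hkk]
    funext t
    show x (k + 1 + t.1) = x (k' + 1 + t.1)
    have := congrFun hfull ⟨t.1 + 1, by omega⟩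
    simp only [ff] at this
    have e1 : k + (t.1 + 1) = k + 1 + t.1 := by omega
    have e2 : k' + (t.1 + 1) = k' + 1 + t.1 := by omega
    rw [e1, e2] at this
    exact this
  obtain ⟨j, hj, hmatch⟩ := sf_mem x n
  set b := sf x n with hb
  have hiter : ∀ i, ff x n (j + i) = ff x n (b + i) := by
    intro i
    induction i with
    | zero => exact (ff_eq_iff x).2 hmatch
    | succ i IH =>
      have := hstep _ _ IH
      have e1 : j + i + 1 = j + (i + 1) := by omega
      have e2 : b + i + 1 = b + (i + 1) := by omega
      rw [e1, e2] at this
      exact this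
  refine ⟨b - j, by omega, j, fun m hm => ?_⟩
  have := congrFun (hiter (m - j)) ⟨0, by omega⟩
  simp only [ff] at this
  have e1 : j + (m - j) + 0 = m := by omega
  have e2 : b + (m - j) + 0 = m + (b - j) := by omega
  rw [e1, e2] at this
  exact this.symm

lemma two_le_pc_one (hA : ¬ EventuallyPeriodic x) : 2 ≤ pc 1 x := by
  by_contra hc
  push_neg at hc
  apply hA
  refine ⟨1, by omega, 0, fun m _ => ?_⟩
  have h1 : ff x 1 (m + 1) ∈ lf x 1 := mem_lf x 1 (m + 1)
  have h2 : ff x 1 m ∈ lf x 1 := mem_lf x 1 m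
  have heq : ff x 1 (m + 1) = ff x 1 m := by
    by_contra hne
    have : 1 < (lf x 1).ncard := (Set.one_lt_ncard_iff (Set.toFinite _)).2
      ⟨ff x 1 (m + 1), ff x 1 m, h1, h2, hne⟩
    rw [← pc_eq] at this
    omega
  have := congrFun heq ⟨0, by omega⟩
  simpa [ff] using this

lemma pc_strict (hA : ¬ EventuallyPeriodic x) {n : ℕ} (hn : 1 ≤ n) :
    pc n x + 1 ≤ pc (n + 1) x := by
  by_contra hc
  push_neg at hc
  exact hA (evp_of_pc_succ_le x hn (by omega))

lemma pc_ge (hA : ¬ EventuallyPeriodic x) : ∀ n, 1 ≤ n → n + 1 ≤ pc n x := by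
  intro n hn
  induction n with
  | zero => omega
  | succ n IH =>
    by_cases h1 : n = 0
    · subst h1; exact two_le_pc_one x hA
    · have := IH (by omega)
      have := pc_strict x hA (n := n) (by omega)
      omega

lemma pc_gap (hA : ¬ EventuallyPeriodic x) {m ν : ℕ} (hm : 1 ≤ m) (h : m ≤ ν) :
    pc m x + (ν - m) ≤ pc ν x := by
  induction ν with
  | zero => omega
  | succ ν IH =>
    by_cases he : m = ν + 1
    · subst he; simp
    · have hmν : m ≤ ν := by omega
      have := IH hmν
      have := pc_strict x hA (n := ν) (by omega)
      omega

/-- KEY LEMMA (forward): an aperiodic word has `sf ν ≥ ν + 1` for arbitrarily large `ν`. -/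
lemma exists_big (hA : ¬ EventuallyPeriodic x) :
    ∀ N, ∃ ν, N ≤ ν ∧ ν + 1 ≤ sf x ν := by
  by_contra hcon
  push_neg at hcon
  obtain ⟨N, hN⟩ := hcon
  have hN' : ∀ ν, N ≤ ν → sf x ν ≤ ν := fun ν hv => by have := hN ν hv; omega
  set N₁ := max N 1 with hN₁
  have key : ∀ k m, N₁ + k ≤ m → sf x m + 2 * k ≤ m := by
    intro k
    induction k with
    | zero =>
      intro m hm
      have := hN' m (by omega)
      omega
    | succ k IH =>
      intro m hm
      set ν := m - 1 with hν
      have hν1 : 1 ≤ ν := by omega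
      have hsν : sf x ν + 2 * k ≤ ν := IH ν (by omega)
      have hnsub : ¬ lf x ν ⊆ ff x ν '' Set.Iic ν := by
        intro hsub
        have h1 := pc_le_of_subset_rep x (by omega) hsub
        have h2 := pc_ge x hA ν hν1
        omega
      obtain ⟨q, hq1, hqmin⟩ := exists_missing x hnsub
      obtain ⟨μ, hμν, hμq, hμmin⟩ := main_step x hqmin (by omega)
      have hμbig : sf x μ + 2 * k ≤ μ := IH μ (by omega)
      have hmono : sf x m ≤ sf x (μ - 1) := sf_mono x (by omega)
      omega
  have h1 := key N₁ (N₁ + N₁) (by omega)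
  have h2 := sf_pos x (N₁ + N₁)
  omega

/-- KEY LEMMA (backward): at a scale where the first repeat is maximal, complexity is
minimal. -/
lemma pc_le_of_eq {ν : ℕ} (hν : 1 ≤ ν) (hsle : ∀ n, 1 ≤ n → sf x n ≤ n + 1)
    (hE : sf x ν = ν + 1) : pc ν x ≤ ν + 1 := by
  by_contra hcon
  push_neg at hcon
  have hnsub : ¬ lf x ν ⊆ ff x ν '' Set.Iic ν := by
    intro hsub
    have := pc_le_of_subset x hsub
    omega
  obtain ⟨q, hq1, hqmin⟩ := exists_missing x hnsub
  by_cases hq2 : q = ν + 1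
  · exact capture x (m := ν) hqmin (by omega) (by omega)
  · have hqbig : ν + 2 ≤ q := by omega
    obtain ⟨μ, hμν, hμq, hμmin⟩ := main_step x hqmin (by omega)
    have hμle : sf x μ ≤ μ + 1 := hsle μ (by omega)
    have hmono : sf x ν ≤ sf x (μ - 1) := sf_mono x (by omega)
    omega

end SturmianRcAux

open SturmianRcAux

theorem sturmian_iff_rc {A : Type*} [Fintype A] (x : ℕ → A) :
    IsSturmian x ↔
      ((∀ n ≥ 1, rc n x ≤ 2 * n + 1) ∧ {n : ℕ | rc n x = 2 * n + 1}.Infinite) := by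
  constructor
  · intro hSt
    have hA := not_evp_of_sturmian x hSt
    have hsle : ∀ n, 1 ≤ n → sf x n ≤ n + 1 := by
      intro n hn
      have := sf_le_pc x n
      rw [hSt n hn] at this
      exact this
    constructor
    · intro n hn
      rw [rc_eq]
      have := hsle n hn
      omega
    · apply Set.infinite_of_not_bddAbove
      rintro ⟨b, hb⟩
      obtain ⟨ν, hν1, hν2⟩ := exists_big x hA (b + 1)
      have hνE : rc ν x = 2 * ν + 1 := by
        rw [rc_eq]
        have := hsle ν (by omega)
        omega
      have := hb (Set.mem_setOf.2 hνE)
      omega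
  · rintro ⟨h1, h2⟩
    have hsle : ∀ n, 1 ≤ n → sf x n ≤ n + 1 := by
      intro n hn
      have := h1 n hn
      rw [rc_eq] at this
      omega
    have hA : ¬ EventuallyPeriodic x := by
      intro h
      obtain ⟨C, hC⟩ := sf_bounded_of_evp x h
      apply h2
      apply Set.Finite.subset (Set.finite_Iic C)
      intro n hn
      simp only [Set.mem_setOf_eq] at hn
      rw [rc_eq] at hn
      have := hC n
      simp only [Set.mem_Iic]
      omega
    intro n hn
    have hEν : ∀ m, ∃ ν, m ≤ ν ∧ 1 ≤ ν ∧ sf x ν = ν + 1 := by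
      intro m
      by_contra hc
      push_neg at hc
      apply h2
      apply Set.Finite.subset (Set.finite_Iio (m + 1))
      intro ν hν
      simp only [Set.mem_setOf_eq] at hν
      rw [rc_eq] at hν
      simp only [Set.mem_Iio]
      by_contra hge
      push_neg at hge
      have := hc ν (by omega) (by omega)
      omega
    obtain ⟨ν, hνn, hν1, hνE⟩ := hEν n
    have hpcν : pc ν x = ν + 1 :=
      le_antisymm (pc_le_of_eq x hν1 hsle hνE) (pc_ge x hA ν hν1)
    have hgap := pc_gap x hA hn hνn
    have hgen := pc_ge x hA n hn
    omega
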